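/- Let (β_m)_{m≥1} be real numbers with 4^m·β_m → 0 as m → ∞, and set c_m = cos 2β_m. Then for all sufficiently large m: S⁻_{c_m} has a unique fixed point p_m in [0,1]; moreover 16^m·p_m → 0 as m → ∞, and the derivative of S⁻_{c_m} at p_m lies in the interval [(1/4)(1 − 4^{−m}), (1/4)(1 + 4^{−m})]. -/

import Mathlib

noncomputable def Sminus (c w : ℝ) : ℝ := 1 - (Real.sqrt 2)⁻¹ * Real.sqrt (1 + (1 - w) * c)

/-- The fixed point of `Sminus c` in `[0,1]`. -/
noncomputable def pfix (c : ℝ) : ℝ := 1 - (c + Real.sqrt (c ^ 2 + 8)) / 4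

lemma sroot_sq (c : ℝ) : Real.sqrt (c ^ 2 + 8) ^ 2 = c ^ 2 + 8 :=
  Real.sq_sqrt (by positivity)

lemma sroot_nonneg (c : ℝ) : 0 ≤ Real.sqrt (c ^ 2 + 8) := Real.sqrt_nonneg _

lemma sroot_ge (c : ℝ) (hc : -1 ≤ c) (hc' : c ≤ 1) : 2 + c ≤ Real.sqrt (c ^ 2 + 8) := by
  have h2 := sroot_sq c
  have h0 := sroot_nonneg c
  nlinarith [mul_nonneg h0 h0, sq_nonneg (Real.sqrt (c ^ 2 + 8) + 2 + c)]

lemma sroot_le (c : ℝ) (hc : c ≤ 1) : Real.sqrt (c ^ 2 + 8) ≤ 4 - c := by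
  have h2 := sroot_sq c
  have h0 := sroot_nonneg c
  nlinarith

lemma pfix_mem (c : ℝ) (hc : -1 ≤ c) (hc' : c ≤ 1) : pfix c ∈ Set.Icc (0 : ℝ) 1 := by
  have h1 := sroot_ge c hc hc'
  have h2 := sroot_le c hc'
  constructor <;> simp only [pfix] <;> nlinarith

lemma one_sub_pfix (c : ℝ) : 1 - pfix c = (c + Real.sqrt (c ^ 2 + 8)) / 4 := by
  simp [pfix]

lemma key_quad (c : ℝ) :
    1 + (1 - pfix c) * c = 2 * ((1 - pfix c)) ^ 2 := by
  rw [one_sub_pfix]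
  have h2 := sroot_sq c
  nlinarith

lemma sqrt_at_pfix (c : ℝ) (hc : -1 ≤ c) (hc' : c ≤ 1) :
    Real.sqrt (1 + (1 - pfix c) * c) = Real.sqrt 2 * (1 - pfix c) := by
  have hu : 0 ≤ 1 - pfix c := by
    rw [one_sub_pfix]; have := sroot_ge c hc hc'; nlinarith
  rw [key_quad, show (2 : ℝ) * (1 - pfix c) ^ 2 = 2 * (1 - pfix c) ^ 2 by ring,
    Real.sqrt_mul (by norm_num), Real.sqrt_sq hu]

lemma pfix_fixed (c : ℝ) (hc : -1 ≤ c) (hc' : c ≤ 1) : Sminus c (pfix c) = pfix c := by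
  have h2 : Real.sqrt 2 ≠ 0 := by positivity
  rw [Sminus, sqrt_at_pfix c hc hc']
  field_simp
  ring

lemma pfix_unique (c : ℝ) (hc : -1 ≤ c) (hc' : c ≤ 1) (q : ℝ) (hq : Sminus c q = q) : q = pfix c := by
  have h2 : (0:ℝ) < Real.sqrt 2 := by positivity
  set v := 1 - q with hv
  have hveq : (Real.sqrt 2)⁻¹ * Real.sqrt (1 + v * c) = v := by
    have := hq; rw [Sminus] at this; linarith
  have hv0 : 0 ≤ v := by
    rw [← hveq]; positivity
  have hpos : 0 ≤ 1 + v * c := by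
    by_contra h
    push_neg at h
    rw [Real.sqrt_eq_zero_of_nonpos h.le] at hveq
    simp at hveq
    rw [← hveq] at h
    simp at h
    linarith
  have hsq : 2 * v ^ 2 = 1 + v * c := by
    have : Real.sqrt (1 + v * c) = Real.sqrt 2 * v := by
      field_simp at hveq
      linarith
    have := congrArg (· ^ 2) this
    rw [Real.sq_sqrt hpos, mul_pow, Real.sq_sqrt (by norm_num : (0:ℝ) ≤ 2)] at this
    linarith
  -- v and u := (c + sqrt(c^2+8))/4 are both nonneg roots of 2x^2 - cx - 1
  have hu := one_sub_pfix c
  have hs2 := sroot_sq c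
  have hs1 := sroot_ge c hc hc'
  have : v = 1 - pfix c := by
    rw [hu]
    nlinarith [sq_nonneg (v - (c + Real.sqrt (c ^ 2 + 8)) / 4), sq_nonneg (v + (c + Real.sqrt (c ^ 2 + 8)) / 4)]
  linarith

lemma derivAtPfix_eq (c : ℝ) (hc : -1 ≤ c) (hc' : c ≤ 1) :
    c / (2 * Real.sqrt 2 * Real.sqrt (1 + (1 - pfix c) * c)) =
      c / (c + Real.sqrt (c ^ 2 + 8)) := by
  rw [sqrt_at_pfix c hc hc', one_sub_pfix]
  have h2 : Real.sqrt 2 * Real.sqrt 2 = 2 := Real.mul_self_sqrt (by norm_num)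
  congr 1
  ring_nf
  rw [Real.sq_sqrt (by norm_num : (0:ℝ) ≤ 2)]
  ring

lemma deriv_bounds (c δ : ℝ) (hc : (1:ℝ)/2 ≤ c) (hc' : c ≤ 1) (hδ : 0 < δ)
    (hε : 1 - c ≤ δ / 4) :
    c / (c + Real.sqrt (c ^ 2 + 8)) ∈ Set.Icc ((1/4) * (1 - δ)) ((1/4) * (1 + δ)) := by
  have hs2 := sroot_sq c
  have hs1 := sroot_ge c (by linarith) hc'
  set s := Real.sqrt (c ^ 2 + 8) with hs
  have hpos : 0 < c + s := by linarith
  constructor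
  · rw [le_div_iff₀ hpos]
    nlinarith [mul_pos hδ hpos, sq_nonneg (s - 3 * c)]
  · rw [div_le_iff₀ hpos]
    nlinarith [sq_nonneg (s - 3 * c)]

lemma pfix_le (c : ℝ) (hc : -1 ≤ c) (hc' : c ≤ 1) : pfix c ≤ (1 - c) / 2 := by
  have := sroot_ge c hc hc'
  simp only [pfix]; linarith

lemma one_sub_cos_le (x : ℝ) : 1 - Real.cos (2 * x) ≤ 2 * x ^ 2 := by
  have := Real.one_sub_sq_div_two_le_cos (x := 2 * x)
  nlinarith

/-- If `4^m·β_m → 0` and `c_m = cos 2β_m`, then for all sufficiently large `m` the map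
`S⁻_{c_m}` has a unique fixed point `p_m` in `[0,1]`; moreover `16^m·p_m → 0` and the
derivative `c_m/(2√2·√(1 + (1 − p_m)c_m))` of `S⁻_{c_m}` at `p_m` lies in
`[(1/4)(1 − 4^{−m}), (1/4)(1 + 4^{−m})]`. -/
theorem stmt14 (β : ℕ → ℝ)
    (hβ : Filter.Tendsto (fun m => (4 : ℝ) ^ m * β m) Filter.atTop (nhds 0)) :
    ∃ (N : ℕ) (p : ℕ → ℝ),
      (∀ m, N ≤ m →
        p m ∈ Set.Icc (0 : ℝ) 1 ∧
        Sminus (Real.cos (2 * β m)) (p m) = p m ∧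
        (∀ q ∈ Set.Icc (0 : ℝ) 1, Sminus (Real.cos (2 * β m)) q = q → q = p m) ∧
        Real.cos (2 * β m) /
            (2 * Real.sqrt 2 * Real.sqrt (1 + (1 - p m) * Real.cos (2 * β m))) ∈
          Set.Icc ((1 / 4) * (1 - ((4 : ℝ) ^ m)⁻¹)) ((1 / 4) * (1 + ((4 : ℝ) ^ m)⁻¹))) ∧
      Filter.Tendsto (fun m => (16 : ℝ) ^ m * p m) Filter.atTop (nhds 0) := by
  obtain ⟨N₀, hN₀⟩ := Metric.tendsto_atTop.mp hβ (1/2) (by norm_num)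
  refine ⟨max N₀ 1, fun m => pfix (Real.cos (2 * β m)), ?_, ?_⟩
  · intro m hm
    set c := Real.cos (2 * β m) with hcdef
    have hc1 : -1 ≤ c := Real.neg_one_le_cos _
    have hc2 : c ≤ 1 := Real.cos_le_one _
    have hm1 : 1 ≤ m := le_trans (le_max_right _ _) hm
    have hm0 : N₀ ≤ m := le_trans (le_max_left _ _) hm
    have hb := hN₀ m hm0
    rw [Real.dist_eq, sub_zero] at hb
    have h4 : (0:ℝ) < 4 ^ m := by positivity
    have hb' := abs_le.mp hb.le
    have hb2 : (β m) ^ 2 ≤ ((4:ℝ) ^ m)⁻¹ ^ 2 / 4 := by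
      have h1 : ((4:ℝ) ^ m * β m) ^ 2 ≤ 1/4 := by nlinarith [hb'.1, hb'.2]
      have h2 : (β m) ^ 2 = ((4:ℝ) ^ m * β m) ^ 2 * ((4:ℝ) ^ m)⁻¹ ^ 2 := by
        field_simp
      rw [h2]
      have hinv : (0:ℝ) ≤ ((4:ℝ) ^ m)⁻¹ ^ 2 := by positivity
      nlinarith
    have hδle : ((4:ℝ) ^ m)⁻¹ ≤ 1/4 := by
      rw [inv_le_comm₀ h4 (by norm_num)]
      calc (1/4 : ℝ)⁻¹ = 4 ^ 1 := by norm_num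
        _ ≤ 4 ^ m := pow_le_pow_right₀ (by norm_num) hm1
    have hε0 : 1 - c ≤ 2 * (β m) ^ 2 := one_sub_cos_le (β m)
    have hε : 1 - c ≤ ((4:ℝ) ^ m)⁻¹ / 4 := by
      nlinarith [mul_le_mul_of_nonneg_left hδle (by positivity : (0:ℝ) ≤ ((4:ℝ) ^ m)⁻¹)]
    have hchalf : (1:ℝ)/2 ≤ c := by linarith
    refine ⟨pfix_mem c hc1 hc2, pfix_fixed c hc1 hc2,
      fun q _ hfix => pfix_unique c hc1 hc2 q hfix, ?_⟩
    rw [derivAtPfix_eq c hc1 hc2]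
    exact deriv_bounds c _ hchalf hc2 (by positivity) hε
  · apply squeeze_zero (g := fun m => ((4:ℝ) ^ m * β m) * ((4:ℝ) ^ m * β m))
    · intro m
      have := (pfix_mem (Real.cos (2 * β m)) (Real.neg_one_le_cos _) (Real.cos_le_one _)).1
      positivity
    · intro m
      have hp : pfix (Real.cos (2 * β m)) ≤ (β m) ^ 2 := by
        have h1 := pfix_le (Real.cos (2 * β m)) (Real.neg_one_le_cos _) (Real.cos_le_one _)
        have h2 := one_sub_cos_le (β m)
        linarith
      calc (16:ℝ) ^ m * pfix (Real.cos (2 * β m)) ≤ 16 ^ m * (β m) ^ 2 :=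
            mul_le_mul_of_nonneg_left hp (by positivity)
        _ = ((4:ℝ) ^ m * β m) * ((4:ℝ) ^ m * β m) := by
            rw [show (16:ℝ) = 4 * 4 by norm_num, mul_pow]; ring
    · simpa using hβ.mul hβ
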